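/- Let G and G* be two genomes over Σ with d_GG(G, G*) = k, and let E be a sequence of k events with G⟨E⟩ = G*. Suppose position p of G is unimportant with respect to E, and let G' be the genome obtained from G by replacing the character G[p] by any other character of Σ. Then d_GG(G', G*) ≤ d_GG(G, G*); in fact G'⟨E⟩ = G*. -/
import Mathlib


/-- An event is either a deletion `del i j` (removing the substring from position `i`
to position `j`, 1-based) or a duplication `dup i j p` (copying the substring from
position `i` to position `j` and inserting the copy after position `p`). -/
inductive GEvent where
  | del (i j : ℕ)
  | dup (i j p : ℕ)
deriving DecidableEq

/-- Applying an event to a genome (a list of characters). -/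
def applyEvent {α : Type*} (G : List α) : GEvent → List α
  | .del i j => G.take (i - 1) ++ G.drop j
  | .dup i j p => G.take p ++ ((G.drop (i - 1)).take (j - i + 1)) ++ G.drop p

/-- Validity of an event on a genome: `del i j` requires `1 ≤ i ≤ j ≤ |G|`;
`dup i j p` requires `1 ≤ i ≤ j ≤ |G|` and `p ∈ {0,…,i−1} ∪ {j,…,|G|}`. -/
def GEvent.Valid {α : Type*} (G : List α) : GEvent → Prop
  | .del i j => 1 ≤ i ∧ i ≤ j ∧ j ≤ G.length
  | .dup i j p => 1 ≤ i ∧ i ≤ j ∧ j ≤ G.length ∧ (p ≤ i - 1 ∨ (j ≤ p ∧ p ≤ G.length))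

/-- `applyEvents G E` is `G⟨E⟩`, the genome obtained by successively applying
the events of `E` to `G`. -/
def applyEvents {α : Type*} (G : List α) : List GEvent → List α
  | [] => G
  | e :: E => applyEvents (applyEvent G e) E

/-- A sequence of events is valid on `G` if each event is valid on the genome
obtained by applying the previous events. -/
def ValidSeq {α : Type*} (G : List α) : List GEvent → Prop
  | [] => True
  | e :: E => e.Valid G ∧ ValidSeq (applyEvent G e) E

/-- The copy-number profile of a genome: the number of occurrences of each character. -/
def cnp {α : Type*} [DecidableEq α] (G : List α) : α → ℕ := fun s => G.count s

/-- The Genome-to-CNP distance: the minimum length of a valid event sequence turning `G`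
into a genome with CNP `c` (`⊤` if there is none). -/
noncomputable def dGCNP {α : Type*} [DecidableEq α] (G : List α) (c : α → ℕ) : ℕ∞ :=
  sInf { k : ℕ∞ | ∃ E : List GEvent,
    ValidSeq G E ∧ (E.length : ℕ∞) = k ∧ cnp (applyEvents G E) = c }

/-- The Genome-to-Genome distance: the minimum length of a valid event sequence
turning `G` into `G'` (`⊤` if there is none). -/
noncomputable def dGG {α : Type*} (G G' : List α) : ℕ∞ :=
  sInf { k : ℕ∞ | ∃ E : List GEvent,
    ValidSeq G E ∧ (E.length : ℕ∞) = k ∧ applyEvents G E = G' }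

/-- The augmented genome of `G = g₁…gₙ`: each character is tagged with its
(1-based) position, giving the genome `(1, g₁) (2, g₂) … (n, gₙ)`. -/
def augment {α : Type*} (G : List α) : List (ℕ × α) :=
  ((List.range G.length).map (· + 1)).zip G

/-- Position `p` (1-based) of `G` is unimportant with respect to the event sequence `E`
if the character of the augmented genome tagged with `p` has no occurrence in `Ĝ⟨E⟩`. -/
def Unimportant {α : Type*} (G : List α) (E : List GEvent) (p : ℕ) : Prop :=
  ∀ x ∈ applyEvents (augment G) E, x.1 ≠ p


lemma applyEvent_map {α β : Type*} (f : α → β) (G : List α) (e : GEvent) :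
    applyEvent (G.map f) e = (applyEvent G e).map f := by
  cases e <;> simp [applyEvent, List.map_take, List.map_drop]

lemma applyEvents_map {α β : Type*} (f : α → β) (G : List α) (E : List GEvent) :
    applyEvents (G.map f) E = (applyEvents G E).map f := by
  induction E generalizing G with
  | nil => rfl
  | cons e E ih => simp [applyEvents, applyEvent_map, ih]

lemma length_applyEvent_eq {α β : Type*} (G : List α) (H : List β)
    (h : G.length = H.length) (e : GEvent) :
    (applyEvent G e).length = (applyEvent H e).length := by
  cases e <;> simp [applyEvent, h]

lemma valid_of_length_eq {α β : Type*} (G : List α) (H : List β)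
    (h : G.length = H.length) (e : GEvent) (hv : e.Valid G) : e.Valid H := by
  cases e <;> simp_all [GEvent.Valid]

lemma validSeq_of_length_eq {α β : Type*} (G : List α) (H : List β)
    (h : G.length = H.length) (E : List GEvent) (hv : ValidSeq G E) :
    ValidSeq H E := by
  induction E generalizing G H with
  | nil => trivial
  | cons e E ih =>
    exact ⟨valid_of_length_eq G H h e hv.1,
      ih _ _ (length_applyEvent_eq G H h e) hv.2⟩

lemma map_snd_augment {α : Type*} (G : List α) : (augment G).map Prod.snd = G := by
  apply List.ext_getElem <;> simp [augment]

/-- Proposition 2 of the paper: let `G`, `G*` be genomes with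
`d_GG(G, G*) = k` and let `E` be a sequence of `k` events with `G⟨E⟩ = G*`.
If position `p` of `G` is unimportant w.r.t. `E` and `G'` is obtained from `G` by
replacing the character at position `p` by any other character `b`,
then `G'⟨E⟩ = G*`, and in particular `d_GG(G', G*) ≤ d_GG(G, G*)`. -/
theorem replace_unimportant
    {α : Type*} [DecidableEq α] (G Gstar : List α) (k : ℕ)
    (E : List GEvent)
    (hvalid : ValidSeq G E)
    (hlen : E.length = k)
    (happly : applyEvents G E = Gstar)
    (hdist : dGG G Gstar = (k : ℕ∞))
    (p : ℕ) (hp1 : 1 ≤ p) (hpn : p ≤ G.length)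
    (hunimp : Unimportant G E p)
    (b : α) (hb : b ≠ G[p - 1]'(by omega))
    (G' : List α) (hG' : G' = G.set (p - 1) b) :
    applyEvents G' E = Gstar ∧ dGG G' Gstar ≤ dGG G Gstar := by
  set f : ℕ × α → ℕ × α := fun q => if q.1 = p then (p, b) else q with hf
  have haug : augment G' = (augment G).map f := by
    apply List.ext_getElem
    · simp [augment, hG']
    · intro j h1 h2
      have hjG : j < G.length := by simpa [augment, hG'] using h1
      simp only [augment, hG', List.getElem_map, List.getElem_zip,
        List.getElem_range, hf]
      by_cases hj : j = p - 1
      · subst hj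
        simp [List.getElem_set, show p - 1 + 1 = p by omega]
      · have : j + 1 ≠ p := by omega
        rw [List.getElem_set, if_neg (by omega), if_neg this]
  have hfix : applyEvents (augment G) E = (applyEvents (augment G) E).map f := by
    symm
    rw [show (applyEvents (augment G) E).map f
        = (applyEvents (augment G) E).map id from ?_, List.map_id]
    apply List.map_congr_left
    intro x hx
    simp [hf, hunimp x hx]
  have key : applyEvents G' E = Gstar := by
    have h1 : applyEvents G' E = (applyEvents (augment G') E).map Prod.snd := by
      conv_lhs => rw [show G' = (augment G').map Prod.snd from (map_snd_augment G').symm]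
      rw [applyEvents_map]
    have h2 : applyEvents G E = (applyEvents (augment G) E).map Prod.snd := by
      conv_lhs => rw [show G = (augment G).map Prod.snd from (map_snd_augment G).symm]
      rw [applyEvents_map]
    rw [h1, haug, applyEvents_map, ← hfix, ← h2, happly]
  refine ⟨key, ?_⟩
  rw [hdist]
  apply sInf_le
  refine ⟨E, ?_, by simp [hlen], key⟩
  exact validSeq_of_length_eq G G' (by simp [hG']) E hvalid
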